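/- Assume hypotheses (EC) and (UC). Let r ∈ (0,r_T) and M > 0. Then the second type optimal time problem (TP)^{M,r} has an optimal control if and only if M ≥ M(0,r). -/

import Mathlib

open MeasureTheory Set Filter Topology

noncomputable section

variable {H : Type*} [NormedAddCommGroup H] [InnerProductSpace ℂ H] [CompleteSpace H]
  [SecondCountableTopology H]

/-- `U` is a strongly continuous one-parameter group of unitary operators on `H`,
abstracting the Schrödinger group `e^{-iΔt}`. -/
def IsUnitaryGroup (U : ℝ → H →L[ℂ] H) : Prop :=
  U 0 = ContinuousLinearMap.id ℂ H ∧
  (∀ s t : ℝ, U (s + t) = (U s).comp (U t)) ∧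
  (∀ (t : ℝ) (x : H), ‖U t x‖ = ‖x‖) ∧
  ∀ x : H, Continuous fun t : ℝ => U t x

/-- `B` is a nonzero orthogonal projection on `H`, abstracting multiplication by `χ_ω`. -/
def IsOrthProj (B : H →L[ℂ] H) : Prop :=
  B ≠ 0 ∧ B.comp B = B ∧ ∀ x y : H, (inner ℂ (B x) y : ℂ) = inner ℂ x (B y)

/-- Membership in `L∞((a,b);H)`. -/
def MemLinfty (u : ℝ → H) (a b : ℝ) : Prop :=
  AEStronglyMeasurable u (volume : Measure ℝ) ∧
    ∃ c : ℝ, ∀ᵐ t : ℝ ∂volume, t ∈ Ioo a b → ‖u t‖ ≤ c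

/-- Membership in `L∞((0,∞);H)`. -/
def MemLinftyInf (u : ℝ → H) : Prop :=
  AEStronglyMeasurable u (volume : Measure ℝ) ∧
    ∃ c : ℝ, ∀ᵐ t : ℝ ∂volume, t ∈ Ioi (0 : ℝ) → ‖u t‖ ≤ c

/-- The `L∞((a,b);H)` norm of `u`. -/
def supNorm (u : ℝ → H) (a b : ℝ) : ℝ :=
  sInf {c : ℝ | 0 ≤ c ∧ ∀ᵐ t : ℝ ∂volume, t ∈ Ioo a b → ‖u t‖ ≤ c}

/-- `stateT U B T τ u y₀ = y(T; χ_{(τ,T)}u, y₀)`, the mild solution at time `T` of the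
controlled Schrödinger equation with initial state `y₀`, the control acting on `(τ,T)`:
`y(T) = U(T)y₀ + ∫_τ^T U(T-s) B u(s) ds`.  The free state at time `t` starting from `y₀`
with control `u` active from time `0` is `stateT U B t 0 u y₀`. -/
def stateT (U : ℝ → H →L[ℂ] H) (B : H →L[ℂ] H) (T τ : ℝ) (u : ℝ → H) (y₀ : H) : H :=
  U T y₀ + ∫ s in Ioo τ T, U (T - s) (B (u s))

/-- Hypothesis (EC): `L∞`-exact controllability with cost. -/
def EC (U : ℝ → H →L[ℂ] H) (B : H →L[ℂ] H) : Prop :=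
  ∀ τ : ℝ, 0 < τ → ∃ C : ℝ, 0 < C ∧ ∀ y₀ z : H, ∃ u : ℝ → H,
    AEStronglyMeasurable u (volume : Measure ℝ) ∧
    (∀ᵐ t : ℝ ∂volume, t ∈ Ioo 0 τ → ‖u t‖ ≤ C * ‖z - U τ y₀‖) ∧
    stateT U B τ 0 u y₀ = z

/-- Hypothesis (UC): unique continuation. -/
def UC (U : ℝ → H →L[ℂ] H) (B : H →L[ℂ] H) : Prop :=
  ∀ η : H, η ≠ 0 → volume {t : ℝ | B (U t η) = 0} = 0

/-- The admissible set `U_M` of the minimal time problem `(TOCP)_M`. -/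
def UMset (U : ℝ → H →L[ℂ] H) (B : H →L[ℂ] H) (y₀ : H) (M : ℝ) : Set (ℝ → H) :=
  {u | MemLinftyInf u ∧ (∀ᵐ t : ℝ ∂volume, t ∈ Ioi (0 : ℝ) → ‖u t‖ ≤ M) ∧
    ∃ s : ℝ, 0 < s ∧ stateT U B s 0 u y₀ = 0}

/-- The minimal time `T_M` of `(TOCP)_M`. -/
def Tmin (U : ℝ → H →L[ℂ] H) (B : H →L[ℂ] H) (y₀ : H) (M : ℝ) : ℝ :=
  sInf {s : ℝ | 0 < s ∧ ∃ u ∈ UMset U B y₀ M, stateT U B s 0 u y₀ = 0}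

/-- The admissible set `V_T` of the minimal norm problem `(NOCP)_T`. -/
def VTset (U : ℝ → H →L[ℂ] H) (B : H →L[ℂ] H) (y₀ : H) (T : ℝ) : Set (ℝ → H) :=
  {v | MemLinfty v 0 T ∧ stateT U B T 0 v y₀ = 0}

/-- The minimal norm `M_T` of `(NOCP)_T`. -/
def Mmin (U : ℝ → H →L[ℂ] H) (B : H →L[ℂ] H) (y₀ : H) (T : ℝ) : ℝ :=
  sInf ((fun v : ℝ → H => supNorm v 0 T) '' VTset U B y₀ T)

/-- Hypothesis (BB): bang-bang property of the minimal time problems. -/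
def BB (U : ℝ → H →L[ℂ] H) (B : H →L[ℂ] H) : Prop :=
  ∀ y₀ : H, y₀ ≠ 0 → ∀ M : ℝ, 0 < M → ∀ u ∈ UMset U B y₀ M,
    stateT U B (Tmin U B y₀ M) 0 u y₀ = 0 →
    ∀ᵐ t : ℝ ∂volume, t ∈ Ioo 0 (Tmin U B y₀ M) → ‖u t‖ = M

/-- Hypothesis (ET): existence of optimal controls for the minimal time problems. -/
def ET (U : ℝ → H →L[ℂ] H) (B : H →L[ℂ] H) : Prop :=
  ∀ y₀ : H, y₀ ≠ 0 → ∀ M : ℝ, 0 < M →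
    ∃ u ∈ UMset U B y₀ M, stateT U B (Tmin U B y₀ M) 0 u y₀ = 0

/-- The admissible set `U_{M,τ}`. -/
def UadmSet (M τ T : ℝ) : Set (ℝ → H) :=
  {u | MemLinfty u 0 T ∧ ∀ᵐ t : ℝ ∂volume, t ∈ Ioo τ T → ‖u t‖ ≤ M}

/-- The optimal distance `r(M,τ)` of the optimal target problem `(OP)^{M,τ}`. -/
def rOP (U : ℝ → H →L[ℂ] H) (B : H →L[ℂ] H) (y₀ z_d : H) (T M τ : ℝ) : ℝ :=
  sInf ((fun u : ℝ → H => ‖stateT U B T τ u y₀ - z_d‖) '' UadmSet M τ T)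

/-- `u` is an optimal control to `(OP)^{M,τ}`. -/
def IsOptOP (U : ℝ → H →L[ℂ] H) (B : H →L[ℂ] H) (y₀ z_d : H) (T M τ : ℝ) (u : ℝ → H) :
    Prop :=
  u ∈ UadmSet M τ T ∧ ‖stateT U B T τ u y₀ - z_d‖ = rOP U B y₀ z_d T M τ

/-- `M^τ`, the minimal norm for exact steering to the target `z_d`. -/
def Mtau (U : ℝ → H →L[ℂ] H) (B : H →L[ℂ] H) (y₀ z_d : H) (T τ : ℝ) : ℝ :=
  sInf ((fun u : ℝ → H => supNorm u τ T) ''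
    {u : ℝ → H | MemLinfty u 0 T ∧ stateT U B T τ u y₀ = z_d})

/-- The admissible set `W_{τ,r}` of the optimal norm problem `(NP)^{τ,r}`. -/
def WadmSet (U : ℝ → H →L[ℂ] H) (B : H →L[ℂ] H) (y₀ z_d : H) (T τ r : ℝ) :
    Set (ℝ → H) :=
  {u | MemLinfty u 0 T ∧ ‖stateT U B T τ u y₀ - z_d‖ ≤ r}

/-- The optimal norm `M(τ,r)` of `(NP)^{τ,r}`. -/
def MNP (U : ℝ → H →L[ℂ] H) (B : H →L[ℂ] H) (y₀ z_d : H) (T τ r : ℝ) : ℝ :=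
  sInf ((fun u : ℝ → H => supNorm u τ T) '' WadmSet U B y₀ z_d T τ r)

/-- `u` is an optimal control to `(NP)^{τ,r}`. -/
def IsOptNP (U : ℝ → H →L[ℂ] H) (B : H →L[ℂ] H) (y₀ z_d : H) (T τ r : ℝ) (u : ℝ → H) :
    Prop :=
  u ∈ WadmSet U B y₀ z_d T τ r ∧ supNorm u τ T = MNP U B y₀ z_d T τ r

/-- The admissible set `V_{M,r}` of the second type optimal time problem `(TP)^{M,r}`. -/
def VadmSet (U : ℝ → H →L[ℂ] H) (B : H →L[ℂ] H) (y₀ z_d : H) (T M r : ℝ) :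
    Set (ℝ → H) :=
  {u | ∃ τ : ℝ, τ ∈ Ico (0 : ℝ) T ∧ u ∈ UadmSet M τ T ∧
    ‖stateT U B T τ u y₀ - z_d‖ ≤ r}

/-- `τ_{M,r}(u)`. -/
def tauOf (U : ℝ → H →L[ℂ] H) (B : H →L[ℂ] H) (y₀ z_d : H) (T r : ℝ) (u : ℝ → H) : ℝ :=
  sSup {τ : ℝ | τ ∈ Ico (0 : ℝ) T ∧ ‖stateT U B T τ u y₀ - z_d‖ ≤ r}

/-- The optimal time `τ(M,r)` of `(TP)^{M,r}`. -/
def tauTP (U : ℝ → H →L[ℂ] H) (B : H →L[ℂ] H) (y₀ z_d : H) (T M r : ℝ) : ℝ :=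
  sSup (tauOf U B y₀ z_d T r '' VadmSet U B y₀ z_d T M r)

/-- `u` is an optimal control to `(TP)^{M,r}`. -/
def IsOptTP (U : ℝ → H →L[ℂ] H) (B : H →L[ℂ] H) (y₀ z_d : H) (T M r : ℝ) (u : ℝ → H) :
    Prop :=
  u ∈ VadmSet U B y₀ z_d T M r ∧
    ‖stateT U B T (tauTP U B y₀ z_d T M r) u y₀ - z_d‖ ≤ r

/-- The adjoint state `φ*(t) = U(t-T)(z_d - y(T; χ_{(τ,T)}u, y₀))`. -/
def adjState (U : ℝ → H →L[ℂ] H) (B : H →L[ℂ] H) (y₀ z_d : H) (T τ : ℝ) (u : ℝ → H)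
    (t : ℝ) : H :=
  U (t - T) (z_d - stateT U B T τ u y₀)


open scoped ENNReal ComplexConjugate
set_option linter.unusedSectionVars false

local notation "⟪" x ", " y "⟫" => @inner ℂ _ _ x y

section lems
variable {U : ℝ → H →L[ℂ] H} {B : H →L[ℂ] H}

lemma IsOrthProj.norm_le (hB : IsOrthProj B) (x : H) : ‖B x‖ ≤ ‖x‖ := by
  rcases eq_or_lt_of_le (norm_nonneg (B x)) with h0 | h0
  · rw [← h0]; exact norm_nonneg x
  have h1 : B (B x) = B x := by
    conv_rhs => rw [← hB.2.1]
    rfl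
  have h2 : (‖B x‖ : ℝ) ^ 2 = RCLike.re ⟪x, B x⟫ := by
    rw [← inner_self_eq_norm_sq (𝕜 := ℂ)]
    rw [hB.2.2 x (B x), h1]
  have h3 : RCLike.re ⟪x, B x⟫ ≤ ‖x‖ * ‖B x‖ := by
    refine le_trans (RCLike.re_le_norm _) ?_
    simpa using norm_inner_le_norm (𝕜 := ℂ) x (B x)
  nlinarith [h2, h3]

lemma IsUnitaryGroup.contPair (hU : IsUnitaryGroup U) :
    Continuous fun p : ℝ × H => U p.1 p.2 := by
  rw [continuous_iff_continuousAt]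
  rintro ⟨t₀, x₀⟩
  have h1 : (fun p : ℝ × H => U p.1 p.2) =
      fun p : ℝ × H => U p.1 (p.2 - x₀) + U p.1 x₀ := by
    funext p; rw [← map_add, sub_add_cancel]
  rw [h1]
  have h2 : ContinuousAt (fun p : ℝ × H => U p.1 x₀) (t₀, x₀) :=
    ((hU.2.2.2 x₀).comp continuous_fst).continuousAt
  have h3 : Tendsto (fun p : ℝ × H => U p.1 (p.2 - x₀)) (𝓝 (t₀, x₀)) (𝓝 0) := by
    have hb : Tendsto (fun p : ℝ × H => ‖p.2 - x₀‖) (𝓝 (t₀, x₀)) (𝓝 0) := by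
      have : Tendsto (fun p : ℝ × H => p.2 - x₀) (𝓝 (t₀, x₀)) (𝓝 (x₀ - x₀)) :=
        (continuous_snd.sub continuous_const).continuousAt
      simpa using this.norm
    exact squeeze_zero_norm (fun p => le_of_eq (hU.2.2.1 _ _)) hb
  have := h3.add h2.tendsto
  simpa [ContinuousAt] using this

lemma aesm_integrand (hU : IsUnitaryGroup U) {μ : Measure ℝ} {v : ℝ → H}
    (hv : AEStronglyMeasurable v μ) (T : ℝ) :
    AEStronglyMeasurable (fun s => U (T - s) (B (v s))) μ := by
  have h1 : AEStronglyMeasurable (fun s => B (v s)) μ :=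
    B.continuous.comp_aestronglyMeasurable hv
  have h2 : AEStronglyMeasurable (fun s : ℝ => ((T - s : ℝ), B (v s))) μ :=
    ((continuous_const.sub continuous_id).aestronglyMeasurable).prodMk h1
  exact hU.contPair.comp_aestronglyMeasurable h2

lemma integrableOn_integrand (hU : IsUnitaryGroup U) (hB : IsOrthProj B)
    {v : ℝ → H} (hv : AEStronglyMeasurable v volume) {a b T M : ℝ}
    (hb : ∀ᵐ t : ℝ ∂volume, t ∈ Ioo a b → ‖v t‖ ≤ M) :
    IntegrableOn (fun s => U (T - s) (B (v s))) (Ioo a b) volume := by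
  refine Integrable.mono' (integrable_const M) ((aesm_integrand hU hv.restrict T)) ?_
  rw [ae_restrict_iff' measurableSet_Ioo]
  filter_upwards [hb] with t ht hmem
  rw [hU.2.2.1]
  exact le_trans (hB.norm_le _) (ht hmem)

lemma IsUnitaryGroup.inner_left (hU : IsUnitaryGroup U) (t : ℝ) (h x : H) :
    ⟪h, U t x⟫ = ⟪U (-t) h, x⟫ := by
  have li : H →ₗᵢ[ℂ] H := ⟨(U t).toLinearMap, hU.2.2.1 t⟩
  have key : ∀ a b : H, ⟪U t a, U t b⟫ = ⟪a, b⟫ :=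
    fun a b => LinearIsometry.inner_map_map ⟨(U t).toLinearMap, hU.2.2.1 t⟩ a b
  have hid : U t (U (-t) h) = h := by
    have := hU.2.1 t (-t)
    rw [add_neg_cancel, hU.1] at this
    calc U t (U (-t) h) = ((U t).comp (U (-t))) h := rfl
    _ = h := by rw [← this]; rfl
  conv_lhs => rw [← hid]
  exact key _ _
end lems

section lems2
variable {U : ℝ → H →L[ℂ] H} {B : H →L[ℂ] H}

lemma inner_state (hU : IsUnitaryGroup U) (hB : IsOrthProj B)
    {v : ℝ → H} (hv : AEStronglyMeasurable v volume) {a b T M : ℝ}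
    (hbd : ∀ᵐ t : ℝ ∂volume, t ∈ Ioo a b → ‖v t‖ ≤ M) (h : H) :
    ⟪h, ∫ s in Ioo a b, U (T - s) (B (v s))⟫ =
      ∫ s in Ioo a b, ⟪B (U (s - T) h), v s⟫ := by
  have hint := integrableOn_integrand hU hB hv (T := T) hbd
  have e0 : ⟪h, ∫ s in Ioo a b, U (T - s) (B (v s))⟫ =
      ∫ s in Ioo a b, (innerSL ℂ h) (U (T - s) (B (v s))) :=
    (ContinuousLinearMap.integral_comp_comm (innerSL ℂ h) hint).symm
  rw [e0]
  refine setIntegral_congr_fun measurableSet_Ioo (fun s _ => ?_)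
  have e1 : (innerSL ℂ h) (U (T - s) (B (v s))) = ⟪h, U (T - s) (B (v s))⟫ := rfl
  rw [e1, hU.inner_left, neg_sub, ← hB.2.2]

end lems2
section lems3
variable {U : ℝ → H →L[ℂ] H} {B : H →L[ℂ] H}

set_option maxHeartbeats 1000000 in
lemma exists_attained (hU : IsUnitaryGroup U) (hB : IsOrthProj B)
    {T τ M r : ℝ} (hτT : τ < T) (hM : 0 < M) (hr : 0 ≤ r) (c' : H)
    (happrox : ∀ δ : ℝ, 0 < δ → ∃ u : ℝ → H,
      AEStronglyMeasurable u volume ∧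
      (∀ᵐ t : ℝ ∂volume, t ∈ Ioo τ T → ‖u t‖ ≤ M) ∧
      ‖(∫ s in Ioo τ T, U (T - s) (B (u s))) - c'‖ ≤ r + δ) :
    ∃ u : ℝ → H, StronglyMeasurable u ∧ (∀ s, s ∉ Ioo τ T → u s = 0) ∧
      (∀ᵐ t : ℝ ∂volume, t ∈ Ioo τ T → ‖u t‖ ≤ M) ∧
      ‖(∫ s in Ioo τ T, U (T - s) (B (u s))) - c'‖ ≤ r := by
  classical
  set μ : Measure ℝ := volume.restrict (Ioo τ T) with hμ
  haveI : Fact ((volume : Measure ℝ) (Ioo τ T) < ⊤) :=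
    ⟨by rw [Real.volume_Ioo]; exact ENNReal.ofReal_lt_top⟩
  haveI : IsFiniteMeasure μ := MeasureTheory.Restrict.isFiniteMeasure _
  -- the test functions g_h
  have hgmem : ∀ h : H, MemLp (fun s : ℝ => B (U (s - T) h)) 2 μ := by
    intro h
    refine MemLp.of_bound ?_ ‖h‖ ?_
    · exact (B.continuous.comp ((hU.2.2.2 h).comp
        (continuous_id.sub continuous_const))).aestronglyMeasurable
    · refine Eventually.of_forall (fun s => ?_)
      calc ‖B (U (s - T) h)‖ ≤ ‖U (s - T) h‖ := hB.norm_le _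
      _ = ‖h‖ := hU.2.2.1 _ _
  set gh : H → Lp H 2 μ := fun h => (hgmem h).toLp _ with hgh
  -- the radius of the ball
  set R : ℝ := ((μ Set.univ) ^ ((2:ℝ≥0∞).toReal)⁻¹ * ENNReal.ofReal M).toReal with hR
  have hRfin : (μ Set.univ) ^ ((2:ℝ≥0∞).toReal)⁻¹ * ENNReal.ofReal M ≠ ⊤ := by
    refine ENNReal.mul_ne_top ?_ ENNReal.ofReal_ne_top
    exact ENNReal.rpow_ne_top_of_nonneg (by norm_num) (measure_ne_top μ _)
  -- norm bound for M-bounded controls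
  have hnormle : ∀ (w : ℝ → H) (hw : MemLp w 2 μ),
      (∀ᵐ s ∂μ, ‖w s‖ ≤ M) → ‖hw.toLp w‖ ≤ R := by
    intro w hw hwb
    rw [Lp.norm_toLp]
    exact ENNReal.toReal_mono hRfin (eLpNorm_le_of_ae_bound hwb)
  -- the closed sets
  set K : Set (WeakDual ℂ (Lp H 2 μ)) :=
    WeakDual.toStrongDual ⁻¹' Metric.closedBall 0 R with hK
  set Cs : Lp H 2 μ → Set (WeakDual ℂ (Lp H 2 μ)) := fun g =>
    {ℓ | RCLike.re (ℓ g) ≤ M * ∫ s, ‖(g : ℝ → H) s‖ ∂μ} with hCs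
  set Es : ℕ → H → Set (WeakDual ℂ (Lp H 2 μ)) := fun n h =>
    {ℓ | RCLike.re (ℓ (gh h)) ≤ RCLike.re ⟪h, c'⟫ + (r + 1/(n+1)) * ‖h‖} with hEs
  set F : ℕ → Set (WeakDual ℂ (Lp H 2 μ)) := fun n =>
    K ∩ ((⋂ g, Cs g) ∩ ⋂ h, Es n h) with hF
  have hCsclosed : ∀ g, IsClosed (Cs g) := by
    intro g
    exact isClosed_le ((RCLike.continuous_re).comp (WeakDual.eval_continuous g))
      continuous_const
  have hEsclosed : ∀ n h, IsClosed (Es n h) := by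
    intro n h
    exact isClosed_le ((RCLike.continuous_re).comp (WeakDual.eval_continuous (gh h)))
      continuous_const
  have hSclosed : ∀ n, IsClosed ((⋂ g, Cs g) ∩ ⋂ h, Es n h) := fun n =>
    (isClosed_iInter hCsclosed).inter (isClosed_iInter (hEsclosed n))
  have hKclosed : IsClosed K := WeakDual.isClosed_closedBall (𝕜 := ℂ) (E := Lp H 2 μ) 0 R
  have hKcompact : IsCompact K := WeakDual.isCompact_closedBall (𝕜 := ℂ) (E := Lp H 2 μ) 0 R
  have hFclosed : ∀ n, IsClosed (F n) := fun n => hKclosed.inter (hSclosed n)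
  have hFcompact : IsCompact (F 0) := hKcompact.inter_right (hSclosed 0)
  -- nonemptiness
  have hFne : ∀ n : ℕ, (F n).Nonempty := by
    intro n
    obtain ⟨u, huA, hub, hue⟩ := happrox (1/(n+1)) (by positivity)
    have hubμ : ∀ᵐ s ∂μ, ‖u s‖ ≤ M := (ae_restrict_iff' measurableSet_Ioo).2 hub
    have hum : MemLp u 2 μ := MemLp.of_bound huA.restrict M hubμ
    set uL : Lp H 2 μ := hum.toLp u with huL
    have hcoe : (uL : ℝ → H) =ᵐ[μ] u := MemLp.coeFn_toLp hum
    have happly : ∀ g : Lp H 2 μ,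
        ((StrongDual.toWeakDual (InnerProductSpace.toDual ℂ _ uL)) g : ℂ)
          = ⟪uL, g⟫ := fun g => InnerProductSpace.toDual_apply_apply
    refine ⟨StrongDual.toWeakDual (InnerProductSpace.toDual ℂ _ uL), ?_, ?_, ?_⟩
    · -- in K
      simp only [hK, mem_preimage, Metric.mem_closedBall, dist_zero_right]
      have e1 : WeakDual.toStrongDual (StrongDual.toWeakDual
          (InnerProductSpace.toDual ℂ _ uL)) = InnerProductSpace.toDual ℂ _ uL := rfl
      rw [e1]; refine (dist_zero_right (InnerProductSpace.toDual ℂ (Lp H 2 μ) uL)).trans_le ?_; rw [LinearIsometryEquiv.norm_map]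
      exact hnormle u hum hubμ
    · -- in all Cs g
      refine mem_iInter.2 (fun g => ?_)
      simp only [hCs, mem_setOf_eq]
      rw [happly g, L2.inner_def]
      have hgint : Integrable (fun s => ‖(g : ℝ → H) s‖) μ :=
        ((Lp.memLp g).integrable one_le_two).norm
      calc RCLike.re (∫ s, ⟪(uL : ℝ → H) s, (g : ℝ → H) s⟫ ∂μ)
          ≤ ‖∫ s, ⟪(uL : ℝ → H) s, (g : ℝ → H) s⟫ ∂μ‖ := RCLike.re_le_norm _
        _ ≤ ∫ s, ‖⟪(uL : ℝ → H) s, (g : ℝ → H) s⟫‖ ∂μ := norm_integral_le_integral_norm _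
        _ ≤ ∫ s, M * ‖(g : ℝ → H) s‖ ∂μ := by
            refine integral_mono_of_nonneg (Eventually.of_forall (fun s => norm_nonneg _))
              (hgint.const_mul M) ?_
            filter_upwards [hcoe, hubμ] with s hs1 hs2
            rw [hs1]
            calc ‖⟪u s, (g : ℝ → H) s⟫‖ ≤ ‖u s‖ * ‖(g : ℝ → H) s‖ := norm_inner_le_norm _ _
              _ ≤ M * ‖(g : ℝ → H) s‖ := by
                  exact mul_le_mul_of_nonneg_right hs2 (norm_nonneg _)
        _ = M * ∫ s, ‖(g : ℝ → H) s‖ ∂μ := integral_const_mul M _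
    · -- in all Es n h
      refine mem_iInter.2 (fun h => ?_)
      simp only [hEs, mem_setOf_eq]
      rw [happly (gh h), L2.inner_def]
      have hcg : ((gh h : Lp H 2 μ) : ℝ → H) =ᵐ[μ] fun s => B (U (s - T) h) :=
        MemLp.coeFn_toLp (hgmem h)
      have e2 : (∫ s, ⟪((gh h : Lp H 2 μ) : ℝ → H) s, (uL : ℝ → H) s⟫ ∂μ)
          = ⟪h, ∫ s in Ioo τ T, U (T - s) (B (u s))⟫ := by
        rw [inner_state hU hB huA hub h]
        refine integral_congr_ae ?_
        filter_upwards [hcoe, hcg] with s hs1 hs2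
        rw [hs1, hs2]
      have e3 : (∫ s, ⟪(uL : ℝ → H) s, ((gh h : Lp H 2 μ) : ℝ → H) s⟫ ∂μ)
          = conj ⟪h, ∫ s in Ioo τ T, U (T - s) (B (u s))⟫ := by
        rw [← e2, ← integral_conj]
        refine integral_congr_ae (Eventually.of_forall (fun s => ?_))
        exact (inner_conj_symm _ _).symm
      rw [e3, RCLike.conj_re]
      have e4 : ⟪h, ∫ s in Ioo τ T, U (T - s) (B (u s))⟫
          = ⟪h, c'⟫ + ⟪h, (∫ s in Ioo τ T, U (T - s) (B (u s))) - c'⟫ := by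
        rw [inner_sub_right]; ring
      rw [e4, map_add]
      have e5 : RCLike.re ⟪h, (∫ s in Ioo τ T, U (T - s) (B (u s))) - c'⟫
          ≤ (r + 1/(n+1)) * ‖h‖ := by
        calc RCLike.re ⟪h, (∫ s in Ioo τ T, U (T - s) (B (u s))) - c'⟫
            ≤ ‖(⟪h, (∫ s in Ioo τ T, U (T - s) (B (u s))) - c'⟫ : ℂ)‖ := RCLike.re_le_norm _
          _ ≤ ‖h‖ * ‖(∫ s in Ioo τ T, U (T - s) (B (u s))) - c'‖ := norm_inner_le_norm _ _
          _ ≤ ‖h‖ * (r + 1/(n+1)) := by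
              exact mul_le_mul_of_nonneg_left hue (norm_nonneg _)
          _ = (r + 1/(n+1)) * ‖h‖ := mul_comm _ _
      linarith
  -- nestedness
  have hFnested : ∀ n, F (n+1) ⊆ F n := by
    intro n ℓ hℓ
    refine ⟨hℓ.1, hℓ.2.1, ?_⟩
    refine mem_iInter.2 (fun h => ?_)
    have h1 := mem_iInter.1 hℓ.2.2 h
    simp only [hEs, mem_setOf_eq] at h1 ⊢
    refine le_trans h1 ?_
    have h2 : (1 : ℝ)/(n+1+1) ≤ 1/(n+1) := by
      rw [div_le_div_iff₀ (by positivity) (by positivity)]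
      push_cast; nlinarith
    have h3 : (r + 1/((n:ℝ)+1+1)) * ‖h‖ ≤ (r + 1/(n+1)) * ‖h‖ := by
      refine mul_le_mul_of_nonneg_right ?_ (norm_nonneg _)
      push_cast at h2 ⊢; linarith
    push_cast at h3 ⊢
    linarith
  -- extract a point of the intersection
  obtain ⟨ℓ, hℓ⟩ := IsCompact.nonempty_iInter_of_sequence_nonempty_isCompact_isClosed
    F hFnested hFne hFcompact hFclosed
  simp only [mem_iInter] at hℓ
  set u0 : Lp H 2 μ := (InnerProductSpace.toDual ℂ (Lp H 2 μ)).symm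
    (WeakDual.toStrongDual ℓ) with hu0
  have hℓapp : ∀ g : Lp H 2 μ, (ℓ g : ℂ) = ⟪u0, g⟫ := by
    intro g
    rw [hu0, ← InnerProductSpace.toDual_apply_apply, LinearIsometryEquiv.apply_symm_apply]
    rfl
  have hC' : ∀ g : Lp H 2 μ, RCLike.re (⟪u0, g⟫ : ℂ) ≤ M * ∫ s, ‖(g : ℝ → H) s‖ ∂μ := by
    intro g
    have := (hℓ 0).2.1
    rw [mem_iInter] at this
    have h2 := this g
    simp only [hCs, mem_setOf_eq] at h2
    rwa [hℓapp g] at h2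
  have hE' : ∀ (n : ℕ) (h : H), RCLike.re (⟪u0, gh h⟫ : ℂ)
      ≤ RCLike.re (⟪h, c'⟫ : ℂ) + (r + 1/(n+1)) * ‖h‖ := by
    intro n h
    have := (hℓ n).2.2
    rw [mem_iInter] at this
    have h2 := this h
    simp only [hEs, mem_setOf_eq] at h2
    rwa [hℓapp (gh h)] at h2
  -- a measurable representative
  set f : ℝ → H := (Lp.aestronglyMeasurable u0).mk _ with hf
  have hfmeas : StronglyMeasurable f := (Lp.aestronglyMeasurable u0).stronglyMeasurable_mk
  have hff : (u0 : ℝ → H) =ᵐ[μ] f := (Lp.aestronglyMeasurable u0).ae_eq_mk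
  have hfmem : MemLp f 2 μ := (Lp.memLp u0).ae_eq hff
  -- the pointwise bound
  have hAnull : ∀ ε : ℝ, 0 < ε → μ {s | M + ε ≤ ‖f s‖} = 0 := by
    intro ε hε
    set A : Set ℝ := {s | M + ε ≤ ‖f s‖} with hA
    have hAmeas : MeasurableSet A := measurableSet_le measurable_const hfmeas.norm.measurable
    have hgind : MemLp (A.indicator f) 2 μ := hfmem.indicator hAmeas
    have hcoeg : (hgind.toLp _ : ℝ → H) =ᵐ[μ] A.indicator f := MemLp.coeFn_toLp hgind
    have h1 := hC' (hgind.toLp _)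
    -- compute LHS
    have hint1 : Integrable (fun s => (⟪(u0 : ℝ → H) s, ((hgind.toLp _ : Lp H 2 μ) : ℝ → H) s⟫ : ℂ)) μ :=
      L2.integrable_inner (𝕜 := ℂ) u0 (hgind.toLp _)
    have e1 : (⟪u0, hgind.toLp _⟫ : ℂ) = ∫ s, (⟪(u0 : ℝ → H) s, ((hgind.toLp _ : Lp H 2 μ) : ℝ → H) s⟫ : ℂ) ∂μ :=
      L2.inner_def _ _
    have e2 : RCLike.re (⟪u0, hgind.toLp _⟫ : ℂ)
        = ∫ s, RCLike.re (⟪(u0 : ℝ → H) s, ((hgind.toLp _ : Lp H 2 μ) : ℝ → H) s⟫ : ℂ) ∂μ := by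
      rw [e1, ← integral_re hint1]
    have e3 : (fun s => RCLike.re (⟪(u0 : ℝ → H) s, ((hgind.toLp _ : Lp H 2 μ) : ℝ → H) s⟫ : ℂ))
        =ᵐ[μ] fun s => A.indicator (fun t => ‖f t‖^2) s := by
      filter_upwards [hff, hcoeg] with s hs1 hs2
      rw [hs1, hs2]
      by_cases hsA : s ∈ A
      · rw [indicator_of_mem hsA, indicator_of_mem hsA, inner_self_eq_norm_sq]
      · rw [indicator_of_notMem hsA, indicator_of_notMem hsA, inner_zero_right]
        simp
    have e4 : RCLike.re (⟪u0, hgind.toLp _⟫ : ℂ) = ∫ s in A, ‖f s‖^2 ∂μ := by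
      rw [e2, integral_congr_ae e3, integral_indicator hAmeas]
    -- compute RHS
    have e5 : (∫ s, ‖((hgind.toLp _ : Lp H 2 μ) : ℝ → H) s‖ ∂μ) = ∫ s in A, ‖f s‖ ∂μ := by
      rw [← integral_indicator hAmeas]
      refine integral_congr_ae ?_
      filter_upwards [hcoeg] with s hs
      rw [hs, norm_indicator_eq_indicator_norm]
    rw [e4, e5] at h1
    -- integrability facts
    have hnormint : Integrable (fun s => ‖f s‖) μ := (hfmem.integrable one_le_two).norm
    have hsqint : Integrable (fun s => ‖f s‖^2) μ := hfmem.norm.integrable_sq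
    -- (M+ε) ∫_A ‖f‖ ≤ ∫_A ‖f‖²
    have h2 : (M+ε) * ∫ s in A, ‖f s‖ ∂μ ≤ ∫ s in A, ‖f s‖^2 ∂μ := by
      rw [← integral_const_mul]
      refine setIntegral_mono_on ((hnormint.const_mul (M+ε)).integrableOn)
        hsqint.integrableOn hAmeas (fun s hs => ?_)
      have : M + ε ≤ ‖f s‖ := hs
      nlinarith [norm_nonneg (f s)]
    -- ∫_A ‖f‖ ≥ (M+ε) * μ(A)
    have h3 : (M+ε) * (μ A).toReal ≤ ∫ s in A, ‖f s‖ ∂μ := by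
      have hc : IntegrableOn (fun _ : ℝ => (M+ε)) A μ :=
        integrableOn_const (lt_of_le_of_lt (measure_mono (subset_univ A))
          (measure_lt_top μ univ)).ne
      have h5 := setIntegral_mono_on hc hnormint.integrableOn hAmeas (fun s hs => hs)
      rwa [setIntegral_const, smul_eq_mul, mul_comm (μ.real A)] at h5
    have hI0 : 0 ≤ ∫ s in A, ‖f s‖ ∂μ :=
      setIntegral_nonneg hAmeas (fun s _ => norm_nonneg _)
    have h6 : (M+ε) * ∫ s in A, ‖f s‖ ∂μ ≤ M * ∫ s in A, ‖f s‖ ∂μ := h2.trans h1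
    have h7 : (∫ s in A, ‖f s‖ ∂μ) = 0 := by nlinarith
    have h4 : (μ A).toReal = 0 := by
      rw [h7] at h3
      have h8 : 0 ≤ (μ A).toReal := ENNReal.toReal_nonneg
      nlinarith
    exact (ENNReal.toReal_eq_zero_iff _).1 h4 |>.resolve_right (measure_ne_top μ A)
  have hbdf : ∀ᵐ s ∂μ, ‖f s‖ ≤ M := by
    have hsub : {s : ℝ | ¬ ‖f s‖ ≤ M} ⊆ ⋃ n : ℕ, {s | M + 1/(n+1) ≤ ‖f s‖} := by
      intro s hs
      simp only [mem_setOf_eq, not_le] at hs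
      obtain ⟨n, hn⟩ := exists_nat_one_div_lt (sub_pos.2 hs)
      exact mem_iUnion.2 ⟨n, by simp only [mem_setOf_eq]; linarith⟩
    exact ae_iff.2 (measure_mono_null hsub (measure_iUnion_null
      (fun n => hAnull (1/(n+1)) (by positivity))))
  have hbdvol : ∀ᵐ t : ℝ ∂volume, t ∈ Ioo τ T → ‖f t‖ ≤ M :=
    (ae_restrict_iff' measurableSet_Ioo).1 hbdf
  -- the final control
  refine ⟨(Ioo τ T).indicator f, hfmeas.indicator measurableSet_Ioo,
    fun s hs => indicator_of_notMem hs _, ?_, ?_⟩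
  · filter_upwards [hbdvol] with t ht hmem
    rw [indicator_of_mem hmem]
    exact ht hmem
  · -- the error bound
    have hΦeq : (∫ s in Ioo τ T, U (T - s) (B ((Ioo τ T).indicator f s)))
        = ∫ s in Ioo τ T, U (T - s) (B (f s)) :=
      setIntegral_congr_fun measurableSet_Ioo (fun s hs => by rw [indicator_of_mem hs])
    rw [hΦeq]
    set Φ : H := ∫ s in Ioo τ T, U (T - s) (B (f s)) with hΦ
    have key : ∀ h : H, RCLike.re (⟪h, Φ - c'⟫ : ℂ) ≤ r * ‖h‖ := by
      intro h
      have hlim : Tendsto (fun n : ℕ => RCLike.re (⟪h, c'⟫ : ℂ) + (r + 1/(n+1)) * ‖h‖)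
          atTop (𝓝 (RCLike.re (⟪h, c'⟫ : ℂ) + r * ‖h‖)) := by
        have h1 : Tendsto (fun n : ℕ => (1:ℝ)/(n+1)) atTop (𝓝 0) :=
          tendsto_one_div_add_atTop_nhds_zero_nat
        have h2 : Tendsto (fun n : ℕ => (r + 1/(n+1)) * ‖h‖) atTop (𝓝 (r * ‖h‖)) := by
          have := ((tendsto_const_nhds (x := r)).add h1).mul_const ‖h‖
          rwa [add_zero] at this
        exact tendsto_const_nhds.add h2
      have hle : RCLike.re (⟪u0, gh h⟫ : ℂ) ≤ RCLike.re (⟪h, c'⟫ : ℂ) + r * ‖h‖ :=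
        ge_of_tendsto' hlim (fun n => hE' n h)
      have hcg : ((gh h : Lp H 2 μ) : ℝ → H) =ᵐ[μ] fun s => B (U (s - T) h) :=
        MemLp.coeFn_toLp (hgmem h)
      have e2 : (∫ s, (⟪((gh h : Lp H 2 μ) : ℝ → H) s, (u0 : ℝ → H) s⟫ : ℂ) ∂μ)
          = ⟪h, Φ⟫ := by
        rw [hΦ, inner_state hU hB hfmeas.aestronglyMeasurable hbdvol h]
        refine integral_congr_ae ?_
        filter_upwards [hff, hcg] with s hs1 hs2
        rw [hs1, hs2]
      have e3 : (⟪u0, gh h⟫ : ℂ) = conj (⟪h, Φ⟫ : ℂ) := by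
        rw [L2.inner_def, ← e2, ← integral_conj]
        refine integral_congr_ae (Eventually.of_forall (fun s => ?_))
        exact (inner_conj_symm _ _).symm
      rw [e3, RCLike.conj_re] at hle
      have e4 : RCLike.re (⟪h, Φ - c'⟫ : ℂ)
          = RCLike.re (⟪h, Φ⟫ : ℂ) - RCLike.re (⟪h, c'⟫ : ℂ) := by
        rw [inner_sub_right, map_sub]
      rw [e4]
      linarith
    have hfin := key (Φ - c')
    rw [inner_self_eq_norm_sq] at hfin
    nlinarith [norm_nonneg (Φ - c')]

end lems3


lemma supNorm_nonneg {H : Type*} [NormedAddCommGroup H] [InnerProductSpace ℂ H] (u : ℝ → H) (a b : ℝ) : 0 ≤ supNorm u a b := Real.sInf_nonneg (fun c hc => hc.1)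

theorem tp_has_optimal_control_iff
    (U : ℝ → H →L[ℂ] H) (B : H →L[ℂ] H) (hU : IsUnitaryGroup U) (hB : IsOrthProj B)
    (hEC : EC U B) (hECrev : EC (fun t => U (-t)) B)
    (hUC : UC U B)
    (T : ℝ) (hT : 0 < T) (y₀ z_d : H) (hrT : 0 < ‖U T y₀ - z_d‖)
    (M r : ℝ) (hr : r ∈ Ioo (0 : ℝ) ‖U T y₀ - z_d‖) (hM : 0 < M) :
    (∃ u : ℝ → H, IsOptTP U B y₀ z_d T M r u) ↔ MNP U B y₀ z_d T 0 r ≤ M := by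
  have hstate : ∀ (τ : ℝ) (u : ℝ → H), stateT U B T τ u y₀ - z_d
      = (∫ s in Ioo τ T, U (T - s) (B (u s))) - (z_d - U T y₀) := by
    intro τ u; rw [stateT]; abel
  have hbddS : ∀ u : ℝ → H, BddAbove {τ : ℝ | τ ∈ Ico (0:ℝ) T ∧
      ‖stateT U B T τ u y₀ - z_d‖ ≤ r} := fun u => ⟨T, fun x hx => hx.1.2.le⟩
  have hbddimg : BddAbove (tauOf U B y₀ z_d T r '' VadmSet U B y₀ z_d T M r) := by
    refine ⟨T, ?_⟩
    rintro y ⟨u, hu, rfl⟩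
    exact Real.sSup_le (fun x hx => hx.1.2.le) hT.le
  have hMNPlb : ∀ y ∈ (fun u : ℝ → H => supNorm u 0 T) '' WadmSet U B y₀ z_d T 0 r,
      (0:ℝ) ≤ y := by
    rintro y ⟨w, hw, rfl⟩
    exact supNorm_nonneg w 0 T
  constructor
  · -- optimal control exists → MNP ≤ M
    rintro ⟨u, huV, herrOpt⟩
    obtain ⟨τ₀, hτ₀Ico, ⟨⟨huA, hcbd⟩, hubM⟩, herr₀⟩ := huV
    set τs : ℝ := tauTP U B y₀ z_d T M r with hτs
    have hτ₀le : τ₀ ≤ tauOf U B y₀ z_d T r u :=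
      le_csSup (hbddS u) ⟨hτ₀Ico, herr₀⟩
    have hτsge : tauOf U B y₀ z_d T r u ≤ τs :=
      le_csSup hbddimg (mem_image_of_mem _ ⟨τ₀, hτ₀Ico, ⟨⟨huA, hcbd⟩, hubM⟩, herr₀⟩)
    have hτ₀τs : τ₀ ≤ τs := hτ₀le.trans hτsge
    have hτs0 : (0:ℝ) ≤ τs := hτ₀Ico.1.trans hτ₀τs
    set v : ℝ → H := (Ioo τs T).indicator u with hv
    have hvbd : ∀ᵐ t : ℝ ∂volume, t ∈ Ioo 0 T → ‖v t‖ ≤ M := by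
      filter_upwards [hubM] with t ht _
      by_cases hm : t ∈ Ioo τs T
      · rw [hv, indicator_of_mem hm]
        exact ht ⟨lt_of_le_of_lt hτ₀τs hm.1, hm.2⟩
      · rw [hv, indicator_of_notMem hm, norm_zero]
        exact hM.le
    have hstateEq : stateT U B T 0 v y₀ = stateT U B T τs u y₀ := by
      rw [stateT, stateT]
      congr 1
      have h1 : ∀ s : ℝ, U (T - s) (B (v s))
          = (Ioo τs T).indicator (fun s => U (T - s) (B (u s))) s := by
        intro s
        by_cases hm : s ∈ Ioo τs T
        · rw [hv, indicator_of_mem hm, indicator_of_mem hm]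
        · rw [hv, indicator_of_notMem hm, indicator_of_notMem hm, map_zero, map_zero]
      calc (∫ s in Ioo 0 T, U (T - s) (B (v s)))
          = ∫ s in Ioo 0 T, (Ioo τs T).indicator (fun s => U (T - s) (B (u s))) s := by
            exact integral_congr_ae (Eventually.of_forall (fun s => h1 s))
        _ = ∫ s in Ioo 0 T ∩ Ioo τs T, U (T - s) (B (u s)) :=
            setIntegral_indicator measurableSet_Ioo
        _ = ∫ s in Ioo τs T, U (T - s) (B (u s)) := by
            rw [Ioo_inter_Ioo, max_eq_right hτs0, min_self]
    have hvW : v ∈ WadmSet U B y₀ z_d T 0 r := by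
      refine ⟨⟨huA.indicator measurableSet_Ioo, ⟨M, hvbd⟩⟩, ?_⟩
      rw [hstateEq]
      exact herrOpt
    have h2 : supNorm v 0 T ≤ M :=
      csInf_le ⟨0, fun c hc => hc.1⟩ ⟨hM.le, hvbd⟩
    calc MNP U B y₀ z_d T 0 r ≤ supNorm v 0 T :=
          csInf_le ⟨0, hMNPlb⟩ (mem_image_of_mem _ hvW)
      _ ≤ M := h2
  · -- MNP ≤ M → optimal control exists
    intro hMNP
    have happrox0 : ∀ δ : ℝ, 0 < δ → ∃ u : ℝ → H,
        AEStronglyMeasurable u volume ∧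
        (∀ᵐ t : ℝ ∂volume, t ∈ Ioo 0 T → ‖u t‖ ≤ M) ∧
        ‖stateT U B T 0 u y₀ - z_d‖ ≤ r + δ := by
      intro δ hδ
      obtain ⟨C, hC, hECap⟩ := hEC T hT
      obtain ⟨ue, hueA, hueb, huee⟩ := hECap y₀ z_d
      have hWne : ((fun u : ℝ → H => supNorm u 0 T) '' WadmSet U B y₀ z_d T 0 r).Nonempty := by
        refine ⟨supNorm ue 0 T, mem_image_of_mem _ ?_⟩
        refine ⟨⟨hueA, ⟨C * ‖z_d - U T y₀‖, hueb⟩⟩, ?_⟩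
        rw [huee, sub_self, norm_zero]
        exact hr.1.le
      set ε : ℝ := δ * M / ‖U T y₀ - z_d‖ with hε
      have hεpos : 0 < ε := by positivity
      have hMNPlt : sInf ((fun u : ℝ → H => supNorm u 0 T) '' WadmSet U B y₀ z_d T 0 r)
          < M + ε := hMNP.trans_lt (by linarith)
      obtain ⟨y, hy, hylt⟩ := exists_lt_of_csInf_lt hWne hMNPlt
      obtain ⟨w, hwW, rfl⟩ := hy
      have hylt' : sInf {c : ℝ | 0 ≤ c ∧ ∀ᵐ t : ℝ ∂volume, t ∈ Ioo 0 T → ‖w t‖ ≤ c}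
          < M + ε := hylt
      have hsetne : {c : ℝ | 0 ≤ c ∧ ∀ᵐ t : ℝ ∂volume, t ∈ Ioo 0 T → ‖w t‖ ≤ c}.Nonempty := by
        obtain ⟨c₁, hc₁⟩ := hwW.1.2
        exact ⟨max c₁ 0, le_max_right _ _,
          by filter_upwards [hc₁] with t ht hm; exact (ht hm).trans (le_max_left _ _)⟩
      obtain ⟨c, ⟨hc0, hcb⟩, hclt⟩ := exists_lt_of_csInf_lt hsetne hylt'
      set lam : ℝ := M / (M + ε) with hlam
      have hlam0 : 0 < lam := by positivity
      have hlam1 : lam ≤ 1 := by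
        rw [hlam, div_le_one (by positivity)]; linarith
      refine ⟨fun s => lam • w s, hwW.1.1.const_smul lam, ?_, ?_⟩
      · filter_upwards [hcb] with t ht hm
        rw [norm_smul, Real.norm_eq_abs, abs_of_pos hlam0]
        calc lam * ‖w t‖ ≤ lam * c := mul_le_mul_of_nonneg_left (ht hm) hlam0.le
          _ ≤ lam * (M + ε) := mul_le_mul_of_nonneg_left hclt.le hlam0.le
          _ = M := by rw [hlam]; field_simp
      · have hsm : stateT U B T 0 (fun s => lam • w s) y₀ - z_d
            = lam • (stateT U B T 0 w y₀ - z_d) + (1 - lam) • (U T y₀ - z_d) := by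
          rw [stateT, stateT]
          have h3 : (∫ s in Ioo 0 T, U (T - s) (B (lam • w s)))
              = lam • ∫ s in Ioo 0 T, U (T - s) (B (w s)) := by
            rw [← integral_smul]
            refine integral_congr_ae (Eventually.of_forall (fun s => ?_))
            show U (T - s) (B (lam • w s)) = lam • U (T - s) (B (w s))
            rw [B.map_smul_of_tower, (U (T - s)).map_smul_of_tower]
          rw [h3]
          module
        rw [hsm]
        have h4 : ‖lam • (stateT U B T 0 w y₀ - z_d)‖ ≤ lam * r := by
          rw [norm_smul, Real.norm_eq_abs, abs_of_pos hlam0]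
          exact mul_le_mul_of_nonneg_left hwW.2 hlam0.le
        have h5 : ‖(1 - lam) • (U T y₀ - z_d)‖ ≤ δ := by
          rw [norm_smul, Real.norm_eq_abs, abs_of_nonneg (by linarith)]
          have h6 : 1 - lam = ε / (M + ε) := by rw [hlam]; field_simp; ring
          have h7 : ε * ‖U T y₀ - z_d‖ = δ * M := by
            rw [hε]; field_simp
          rw [h6, div_mul_eq_mul_div, h7, div_le_iff₀ (by positivity)]
          nlinarith
        calc ‖lam • (stateT U B T 0 w y₀ - z_d) + (1 - lam) • (U T y₀ - z_d)‖
            ≤ lam * r + δ := le_trans (norm_add_le _ _) (by linarith)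
          _ ≤ r + δ := by nlinarith [hr.1.le]
    set c' : H := z_d - U T y₀ with hc'
    -- a member of VadmSet via the attainment lemma at τ = 0
    obtain ⟨u₀, hu₀sm, hu₀supp, hu₀bd, hu₀err⟩ := exists_attained hU hB hT hM hr.1.le c'
      (fun δ hδ => by
        obtain ⟨u, h1, h2, h3⟩ := happrox0 δ hδ
        exact ⟨u, h1, h2, by rw [← hstate 0 u]; exact h3⟩)
    have hu₀errS : ‖stateT U B T 0 u₀ y₀ - z_d‖ ≤ r := by
      rw [hstate 0 u₀]; exact hu₀err
    have hu₀V : u₀ ∈ VadmSet U B y₀ z_d T M r := by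
      refine ⟨0, ⟨le_refl 0, hT⟩, ⟨⟨hu₀sm.aestronglyMeasurable, ⟨M, hu₀bd⟩⟩, hu₀bd⟩, hu₀errS⟩
    -- properties of the optimal time
    set τs : ℝ := tauTP U B y₀ z_d T M r with hτs
    set Tb : ℝ := T - (‖U T y₀ - z_d‖ - r) / M with hTb
    have hTbar : ∀ u ∈ VadmSet U B y₀ z_d T M r, tauOf U B y₀ z_d T r u ≤ Tb := by
      rintro u ⟨τ₀, hτ₀Ico, ⟨hmemL, hubM⟩, herr₀⟩
      have hkey : ∀ τ, (τ ∈ Ico (0:ℝ) T ∧ ‖stateT U B T τ u y₀ - z_d‖ ≤ r) →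
          τ₀ ≤ τ → τ ≤ Tb := by
        rintro τ ⟨hτIco, herr⟩ hτ₀τ
        have hub' : ∀ᵐ t : ℝ ∂volume, t ∈ Ioo τ T → ‖u t‖ ≤ M := by
          filter_upwards [hubM] with t ht hm
          exact ht ⟨lt_of_le_of_lt hτ₀τ hm.1, hm.2⟩
        have hInt : ‖∫ s in Ioo τ T, U (T - s) (B (u s))‖ ≤ M * (T - τ) := by
          have hvol : (volume (Ioo τ T)) < ⊤ := by
            rw [Real.volume_Ioo]; exact ENNReal.ofReal_lt_top
          have hae : ∀ᵐ t : ℝ ∂volume, t ∈ Ioo τ T → ‖U (T - t) (B (u t))‖ ≤ M := by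
            filter_upwards [hub'] with t ht hm
            rw [hU.2.2.1]
            exact (hB.norm_le _).trans (ht hm)
          have hb := norm_setIntegral_le_of_norm_le_const_ae' hvol hae
          calc ‖∫ s in Ioo τ T, U (T - s) (B (u s))‖
              ≤ M * (volume (Ioo τ T)).toReal := hb
            _ = M * (T - τ) := by
                rw [Real.volume_Ioo, ENNReal.toReal_ofReal (by linarith [hτIco.2])]
        have hre : U T y₀ - z_d = (stateT U B T τ u y₀ - z_d)
            - ∫ s in Ioo τ T, U (T - s) (B (u s)) := by
          rw [stateT]; abel
        have h8 : ‖U T y₀ - z_d‖ ≤ r + M * (T - τ) := by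
          rw [hre]
          exact (norm_sub_le _ _).trans (by linarith)
        have h9 : (‖U T y₀ - z_d‖ - r) / M ≤ T - τ :=
          (div_le_iff₀ hM).2 (by nlinarith)
        rw [hTb]; linarith
      have hτ₀Tb : τ₀ ≤ Tb := hkey τ₀ ⟨hτ₀Ico, herr₀⟩ le_rfl
      refine Real.sSup_le (fun x hx => ?_) (hτ₀Ico.1.trans hτ₀Tb)
      rcases le_or_gt x τ₀ with h | h
      · exact h.trans hτ₀Tb
      · exact hkey x hx h.le
    have htau₀ : 0 ≤ tauOf U B y₀ z_d T r u₀ :=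
      le_csSup (hbddS u₀) ⟨⟨le_refl 0, hT⟩, hu₀errS⟩
    have h0Tb : 0 ≤ Tb := htau₀.trans (hTbar u₀ hu₀V)
    have hτsTb : τs ≤ Tb :=
      Real.sSup_le (by rintro y ⟨u, hu, rfl⟩; exact hTbar u hu) h0Tb
    have hτs0 : 0 ≤ τs :=
      htau₀.trans (le_csSup hbddimg (mem_image_of_mem _ hu₀V))
    have hτsT : τs < T := by
      have hpos : 0 < (‖U T y₀ - z_d‖ - r) / M := div_pos (by linarith [hr.2]) hM
      rw [hTb] at hτsTb
      linarith
    -- approximate controls at τs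
    have happroxs : ∀ δ : ℝ, 0 < δ → ∃ u : ℝ → H,
        AEStronglyMeasurable u volume ∧
        (∀ᵐ t : ℝ ∂volume, t ∈ Ioo τs T → ‖u t‖ ≤ M) ∧
        ‖(∫ s in Ioo τs T, U (T - s) (B (u s))) - c'‖ ≤ r + δ := by
      intro δ hδ
      have himg_ne : (tauOf U B y₀ z_d T r '' VadmSet U B y₀ z_d T M r).Nonempty :=
        ⟨_, mem_image_of_mem _ hu₀V⟩
      obtain ⟨y, hymem, hygt⟩ := exists_lt_of_lt_csSup himg_ne
        (show τs - δ/M < τs by have := div_pos hδ hM; linarith)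
      obtain ⟨u, huV, rfl⟩ := hymem
      obtain ⟨τ₀, hτ₀Ico, ⟨hmemL, hubM⟩, herr₀⟩ := huV
      have hSne : {τ : ℝ | τ ∈ Ico (0:ℝ) T ∧ ‖stateT U B T τ u y₀ - z_d‖ ≤ r}.Nonempty :=
        ⟨τ₀, hτ₀Ico, herr₀⟩
      obtain ⟨τ₁, hτ₁S, hτ₁gt⟩ := exists_lt_of_lt_csSup hSne hygt
      set σ : ℝ := max τ₁ τ₀ with hσ
      have hσS : σ ∈ Ico (0:ℝ) T ∧ ‖stateT U B T σ u y₀ - z_d‖ ≤ r := by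
        rcases max_choice τ₁ τ₀ with he | he
        · rw [hσ, he]; exact hτ₁S
        · rw [hσ, he]; exact ⟨hτ₀Ico, herr₀⟩
      have hστs : σ ≤ τs := le_trans (le_csSup (hbddS u) hσS)
        (le_csSup hbddimg (mem_image_of_mem _ ⟨τ₀, hτ₀Ico, ⟨hmemL, hubM⟩, herr₀⟩))
      have hσgt : τs - δ/M < σ := lt_of_lt_of_le hτ₁gt (le_max_left _ _)
      have hτ₀σ : τ₀ ≤ σ := le_max_right _ _
      have hubσ : ∀ᵐ t : ℝ ∂volume, t ∈ Ioo σ T → ‖u t‖ ≤ M := by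
        filter_upwards [hubM] with t ht hm
        exact ht ⟨lt_of_le_of_lt hτ₀σ hm.1, hm.2⟩
      have hubτs : ∀ᵐ t : ℝ ∂volume, t ∈ Ioo τs T → ‖u t‖ ≤ M := by
        filter_upwards [hubM] with t ht hm
        exact ht ⟨lt_of_le_of_lt (hτ₀σ.trans hστs) hm.1, hm.2⟩
      refine ⟨u, hmemL.1, hubτs, ?_⟩
      have hIntOn : IntegrableOn (fun s => U (T - s) (B (u s))) (Ioo σ T) volume :=
        integrableOn_integrand hU hB hmemL.1 hubσ
      have hsplit : Ioo σ T = Ioc σ τs ∪ Ioo τs T :=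
        (Ioc_union_Ioo_eq_Ioo hστs hτsT).symm
      have hdisj : Disjoint (Ioc σ τs) (Ioo τs T) :=
        Set.disjoint_left.2 (fun x hx1 hx2 => absurd hx2.1 (not_lt.2 hx1.2))
      have hint1 : IntegrableOn (fun s => U (T - s) (B (u s))) (Ioc σ τs) volume :=
        hIntOn.mono_set (by rw [hsplit]; exact subset_union_left)
      have hint2 : IntegrableOn (fun s => U (T - s) (B (u s))) (Ioo τs T) volume :=
        hIntOn.mono_set (by rw [hsplit]; exact subset_union_right)
      have hsum : (∫ s in Ioo σ T, U (T - s) (B (u s)))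
          = (∫ s in Ioc σ τs, U (T - s) (B (u s)))
            + ∫ s in Ioo τs T, U (T - s) (B (u s)) := by
        rw [hsplit]
        exact setIntegral_union hdisj measurableSet_Ioo hint1 hint2
      have hsmall : ‖∫ s in Ioc σ τs, U (T - s) (B (u s))‖ ≤ M * (τs - σ) := by
        have hvol : (volume (Ioc σ τs)) < ⊤ := by
          rw [Real.volume_Ioc]; exact ENNReal.ofReal_lt_top
        have hae : ∀ᵐ t : ℝ ∂volume, t ∈ Ioc σ τs → ‖U (T - t) (B (u t))‖ ≤ M := by
          filter_upwards [hubM] with t ht hm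
          rw [hU.2.2.1]
          refine (hB.norm_le _).trans (ht ⟨lt_of_le_of_lt hτ₀σ hm.1, ?_⟩)
          exact lt_of_le_of_lt hm.2 hτsT
        have hb := norm_setIntegral_le_of_norm_le_const_ae' hvol hae
        calc ‖∫ s in Ioc σ τs, U (T - s) (B (u s))‖
            ≤ M * (volume (Ioc σ τs)).toReal := hb
          _ = M * (τs - σ) := by
              rw [Real.volume_Ioc, ENNReal.toReal_ofReal (by linarith)]
      have herrσ : ‖(∫ s in Ioo σ T, U (T - s) (B (u s))) - c'‖ ≤ r := by
        rw [← hstate σ u]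
        exact hσS.2
      calc ‖(∫ s in Ioo τs T, U (T - s) (B (u s))) - c'‖
          = ‖((∫ s in Ioo σ T, U (T - s) (B (u s))) - c')
            - ∫ s in Ioc σ τs, U (T - s) (B (u s))‖ := by rw [hsum]; congr 1; abel
        _ ≤ r + M * (τs - σ) := le_trans (norm_sub_le _ _) (by linarith)
        _ ≤ r + δ := by
            have h9 : M * (τs - σ) ≤ M * (δ/M) :=
              mul_le_mul_of_nonneg_left (by linarith) hM.le
            have h10 : M * (δ/M) = δ := by field_simp
            linarith
    -- the optimal control
    obtain ⟨us, hussm, hussupp, husbd, huserr⟩ :=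
      exists_attained hU hB hτsT hM hr.1.le c' happroxs
    have huserrS : ‖stateT U B T τs us y₀ - z_d‖ ≤ r := by
      rw [hstate τs us]; exact huserr
    have husV : us ∈ VadmSet U B y₀ z_d T M r := by
      refine ⟨τs, ⟨hτs0, hτsT⟩, ⟨⟨hussm.aestronglyMeasurable, ⟨M, ?_⟩⟩, husbd⟩, huserrS⟩
      filter_upwards [husbd] with t ht _
      by_cases hmem : t ∈ Ioo τs T
      · exact ht hmem
      · rw [hussupp t hmem, norm_zero]; exact hM.le
    exact ⟨us, husV, huserrS⟩
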